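/- Let b ≥ 2, let P, Q be positive integers coprime to each other and to b with b < P < Q, and let C = {(⌊tP⌋, ⌊tQ⌋) : t ∈ [0,1)}. Then there exists an integer i₀ with 0 ≤ i₀ < b such that both (i₀, b−1) ∈ C and (i₀, b) ∈ C. -/

import Mathlib

theorem exists_double_point (b P Q : ℕ) (hb : 2 ≤ b)
    (hbP : b < P) (hPQ' : P < Q)
    (hPQ : Nat.Coprime P Q) (hPb : Nat.Coprime P b) (hQb : Nat.Coprime Q b) :
    ∃ i₀ : ℕ, i₀ < b ∧
      ((i₀ : ℤ), (b : ℤ) - 1) ∈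
        {p : ℤ × ℤ | ∃ t : ℝ, 0 ≤ t ∧ t < 1 ∧ p = (⌊t * P⌋, ⌊t * Q⌋)} ∧
      ((i₀ : ℤ), (b : ℤ)) ∈
        {p : ℤ × ℤ | ∃ t : ℝ, 0 ≤ t ∧ t < 1 ∧ p = (⌊t * P⌋, ⌊t * Q⌋)} := by
  have hQ0 : 0 < Q := by omega
  have hP0 : 0 < P := by omega
  set i₀ := b * P / Q with hi₀
  -- Q does not divide b*P
  have hndvd : ¬ Q ∣ b * P := by
    intro h
    have h1 : Q ∣ b := (Nat.Coprime.dvd_of_dvd_mul_right (hPQ.symm)) h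
    have := Nat.le_of_dvd (by omega) h1
    omega
  have hmod : b * P % Q ≠ 0 := fun h => hndvd (Nat.dvd_of_mod_eq_zero h)
  have hdm := Nat.div_add_mod (b * P) Q
  have hmlt := Nat.mod_lt (b * P) hQ0
  have hA' : i₀ * Q < b * P := by
    have h1 : i₀ * Q = Q * (b * P / Q) := by rw [hi₀]; ring
    omega
  have hB : b * P < (i₀ + 1) * Q := by
    have h1 : (i₀ + 1) * Q = Q * (b * P / Q) + Q := by rw [hi₀]; ring
    omega
  have hi₀b : i₀ < b := by
    have : b * P < Q * b := by nlinarith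
    exact Nat.div_lt_of_lt_mul this
  -- real versions
  have hQR : (0:ℝ) < (Q:ℝ) := by exact_mod_cast hQ0
  have hPR : (0:ℝ) < (P:ℝ) := by exact_mod_cast hP0
  have hAR : (i₀:ℝ) * Q < b * P := by exact_mod_cast hA'
  have hBR : (b:ℝ) * P < (i₀ + 1) * Q := by exact_mod_cast hB
  refine ⟨i₀, hi₀b, ?_, ?_⟩
  · -- point (i₀, b-1), via t₂ = max ((b-1)/Q) (i₀/P)
    refine ⟨max (((b:ℝ) - 1)/Q) ((i₀:ℝ)/P), ?_, ?_, ?_⟩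
    · positivity
    · apply max_lt
      · rw [div_lt_one hQR]
        have : (b:ℝ) < Q := by exact_mod_cast (by omega : b < Q)
        linarith
      · rw [div_lt_one hPR]
        have : (i₀:ℝ) < P := by
          exact_mod_cast (by
            have : b * P < Q * P := by nlinarith
            calc i₀ < b := hi₀b
            _ < P := hbP)
        exact this
    · have hfP : ⌊(max (((b:ℝ) - 1)/Q) ((i₀:ℝ)/P)) * P⌋ = (i₀ : ℤ) := by
        rw [Int.floor_eq_iff]
        constructor
        · push_cast
          calc (i₀:ℝ) = (i₀:ℝ)/P * P := by field_simp
          _ ≤ _ := by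
            apply mul_le_mul_of_nonneg_right (le_max_right _ _) hPR.le
        · push_cast
          have h1 : ((b:ℝ) - 1)/Q * P < (i₀:ℝ) + 1 := by
            rw [div_mul_eq_mul_div, div_lt_iff₀ hQR]
            nlinarith
          have h2 : (i₀:ℝ)/P * P < (i₀:ℝ) + 1 := by
            field_simp
            linarith
          calc (max (((b:ℝ) - 1)/Q) ((i₀:ℝ)/P)) * P
              = max (((b:ℝ) - 1)/Q * P) ((i₀:ℝ)/P * P) := by
                rw [max_mul_of_nonneg _ _ hPR.le]
          _ < (i₀:ℝ) + 1 := max_lt h1 h2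
      have hfQ : ⌊(max (((b:ℝ) - 1)/Q) ((i₀:ℝ)/P)) * Q⌋ = (b : ℤ) - 1 := by
        rw [Int.floor_eq_iff]
        constructor
        · push_cast
          calc (b:ℝ) - 1 = ((b:ℝ)-1)/Q * Q := by field_simp
          _ ≤ _ := mul_le_mul_of_nonneg_right (le_max_left _ _) hQR.le
        · push_cast
          have h1 : ((b:ℝ) - 1)/Q * Q < (b:ℝ) - 1 + 1 := by
            field_simp
            linarith
          have h2 : (i₀:ℝ)/P * Q < (b:ℝ) - 1 + 1 := by
            rw [div_mul_eq_mul_div, div_lt_iff₀ hPR]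
            nlinarith
          calc (max (((b:ℝ) - 1)/Q) ((i₀:ℝ)/P)) * Q
              = max (((b:ℝ) - 1)/Q * Q) ((i₀:ℝ)/P * Q) := by
                rw [max_mul_of_nonneg _ _ hQR.le]
          _ < (b:ℝ) - 1 + 1 := max_lt h1 h2
      simp [hfP, hfQ]
  · -- point (i₀, b), via t₁ = b/Q
    refine ⟨(b:ℝ)/Q, by positivity, ?_, ?_⟩
    · rw [div_lt_one hQR]; exact_mod_cast (by omega : b < Q)
    · have hfP : ⌊((b:ℝ)/Q) * P⌋ = (i₀ : ℤ) := by
        rw [Int.floor_eq_iff]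
        constructor
        · push_cast
          rw [div_mul_eq_mul_div, le_div_iff₀ hQR]
          nlinarith
        · push_cast
          rw [div_mul_eq_mul_div, div_lt_iff₀ hQR]
          nlinarith
      have hfQ : ⌊((b:ℝ)/Q) * Q⌋ = (b : ℤ) := by
        rw [div_mul_cancel₀ _ hQR.ne']
        exact Int.floor_natCast b
      simp [hfP, hfQ]
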